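/- Let n be a positive integer, λ an infinite cardinal, and τ a shift-continuous T₁ topology on I_λ^n. Then the natural partial order ≼ is closed in (I_λ^n, τ) × (I_λ^n, τ), i.e., (I_λ^n, τ, ≼) is a pospace. -/

import Mathlib

open Set Topology

universe v

namespace ISemi

/-- The set of partial injective transformations (partial bijections) of `ι`
with rank (cardinality of the range, equivalently of the domain) at most `n`. -/
def Elem (ι : Type*) (n : ℕ) : Type _ :=
  {f : ι ≃. ι // {a : ι | (f a).isSome}.encard ≤ (n : ℕ∞)}

variable {ι : Type*} {n : ℕ}

/-- Composition of partial bijections (written multiplicatively). -/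
instance : Semigroup (Elem ι n) where
  mul f g := ⟨f.1.trans g.1, by
    refine le_trans (Set.encard_mono ?_) f.2
    intro a ha
    simp only [Set.mem_setOf_eq] at *
    rcases Option.isSome_iff_exists.1 ha with ⟨c, hc⟩
    rcases (PEquiv.trans_eq_some _ _ _ _).1 hc with ⟨b, hb, -⟩
    simp [hb]⟩
  mul_assoc f g h := Subtype.ext (PEquiv.trans_assoc f.1 g.1 h.1)

/-- The inverse partial bijection. -/
def inv (f : Elem ι n) : Elem ι n := ⟨f.1.symm, by
  have key : ∀ (g : ι ≃. ι), {b : ι | (g.symm b).isSome} ⊆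
      (fun p : {a : ι | (g a).isSome} => (g p.1).get p.2) '' Set.univ := by
    intro g b hb
    rcases Option.isSome_iff_exists.1 hb with ⟨a, ha⟩
    have ha' : b ∈ g a := (PEquiv.mem_iff_mem g).1 (Option.mem_def.2 ha)
    simp only [Option.mem_def] at ha'
    refine ⟨⟨a, ?_⟩, Set.mem_univ _, ?_⟩
    · simp [Set.mem_setOf_eq, ha']
    · simp [ha']
  calc {b : ι | (f.1.symm b).isSome}.encard
      ≤ ((fun p : {a : ι | (f.1 a).isSome} => (f.1 p.1).get p.2) '' Set.univ).encard :=
        Set.encard_mono (key f.1)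
    _ ≤ (Set.univ : Set {a : ι | (f.1 a).isSome}).encard := Set.encard_image_le _ _
    _ = {a : ι | (f.1 a).isSome}.encard := Set.encard_univ _
    _ ≤ (n : ℕ∞) := f.2⟩

/-- The zero (the empty partial map). -/
def zero (ι : Type*) (n : ℕ) : Elem ι n := ⟨⊥, by simp [PEquiv.bot_apply]⟩

/-- idempotents -/
def IsIdem (e : Elem ι n) : Prop := e * e = e

/-- The natural partial order on the inverse semigroup `Elem ι n`:
`f ≼ g` iff `f = e * g` for some idempotent `e`. -/
def nle (f g : Elem ι n) : Prop := ∃ e : Elem ι n, IsIdem e ∧ f = e * g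

/-- up-set of `f` w.r.t. the natural partial order -/
def upset (f : Elem ι n) : Set (Elem ι n) := {g | nle f g}

/-- the rank of a partial bijection: the cardinality of its domain (= range) -/
noncomputable def rank (f : Elem ι n) : ℕ∞ := {a : ι | (f.1 a).isSome}.encard

def dom (f : Elem ι n) : Set ι := {a : ι | (f.1 a).isSome}

def ran (f : Elem ι n) : Set ι := {b : ι | (f.1.symm b).isSome}

/-- A topology on `Elem ι n` is shift-continuous if all left and right
translations are continuous. -/
def ShiftContinuous (ι : Type*) (n : ℕ) [TopologicalSpace (Elem ι n)] : Prop :=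
  ∀ a : Elem ι n, Continuous (fun x : Elem ι n => a * x) ∧
    Continuous (fun x : Elem ι n => x * a)

/-- A space is feebly compact if every locally finite family of nonempty open
sets is finite. -/
def FeeblyCompact (X : Type*) [TopologicalSpace X] : Prop :=
  ∀ 𝒰 : Set (Set X), (∀ U ∈ 𝒰, IsOpen U ∧ U.Nonempty) →
    LocallyFinite (fun U : 𝒰 => (U : Set X)) → 𝒰.Finite

/-- A space is `d`-feebly compact if every discrete family of open sets is
finite; a family is discrete if every point has a neighbourhood meeting at
most one member of the family. -/
def DFeeblyCompact (X : Type*) [TopologicalSpace X] : Prop :=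
  ∀ 𝒰 : Set (Set X), (∀ U ∈ 𝒰, IsOpen U) →
    (∀ x : X, ∃ V ∈ 𝓝 x, {U ∈ 𝒰 | (U ∩ V).Nonempty}.Subsingleton) → 𝒰.Finite

/-- countably pracompact: there is a dense set `A` such that every infinite
subset of `A` has an accumulation point in `X`. -/
def CountablyPracompact (X : Type*) [TopologicalSpace X] : Prop :=
  ∃ A : Set X, Dense A ∧ ∀ B ⊆ A, B.Infinite → ∃ x : X, AccPt x (Filter.principal B)

/-- H-closed: closed in every Hausdorff space in which it embeds. -/
def HClosed (X : Type*) [TopologicalSpace X] : Prop :=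
  ∀ (Y : Type v) (_ : TopologicalSpace Y), T2Space Y →
    ∀ e : X → Y, IsEmbedding e → IsClosed (Set.range e)

/-- infra H-closed: every continuous image in a first-countable Hausdorff
space is closed. -/
def InfraHClosed (X : Type*) [TopologicalSpace X] : Prop :=
  ∀ (Y : Type v) (_ : TopologicalSpace Y), T2Space Y →
    FirstCountableTopology Y → ∀ f : X → Y, Continuous f → IsClosed (Set.range f)

/-- `Y`-compactness: every continuous image in `Y` is compact. -/
def YCompact (X : Type*) [TopologicalSpace X] (Y : Type*) [TopologicalSpace Y] : Prop :=
  ∀ f : X → Y, Continuous f → IsCompact (Set.range f)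

/-- scattered: every nonempty subset has a point isolated in it. -/
def Scattered (X : Type*) [TopologicalSpace X] : Prop :=
  ∀ S : Set X, S.Nonempty → ∃ x ∈ S, ∃ U : Set X, IsOpen U ∧ U ∩ S = {x}

/-- semiregular: there is a base consisting of regular open sets. -/
def Semiregular (X : Type*) [TopologicalSpace X] : Prop :=
  ∃ B : Set (Set X), TopologicalSpace.IsTopologicalBasis B ∧
    ∀ U ∈ B, interior (closure U) = U

/-- countably compact: every countable open cover has a finite subcover. -/
def CountablyCompact (X : Type*) [TopologicalSpace X] : Prop :=
  ∀ 𝒰 : Set (Set X), 𝒰.Countable → (∀ U ∈ 𝒰, IsOpen U) → ⋃₀ 𝒰 = Set.univ →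
    ∃ 𝒱 ⊆ 𝒰, 𝒱.Finite ∧ ⋃₀ 𝒱 = Set.univ

end ISemi

namespace ISemi

variable {ι : Type*} {n : ℕ}

lemma mul_apply (f g : Elem ι n) (a : ι) : (f * g).1 a = (f.1 a).bind g.1 := rfl

lemma inv_val (f : Elem ι n) : (inv f).1 = f.1.symm := rfl

lemma inv_inv (f : Elem ι n) : inv (inv f) = f := Subtype.ext (PEquiv.symm_symm f.1)

lemma proj_apply (f : Elem ι n) (a : ι) :
    (f * inv f).1 a = if (f.1 a).isSome then some a else none := by
  rw [mul_apply, inv_val]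
  cases hfa : f.1 a with
  | none => simp
  | some b => simp [(f.1.eq_some_iff).2 hfa]

lemma coproj_apply (f : Elem ι n) (b : ι) :
    (inv f * f).1 b = if (f.1.symm b).isSome then some b else none := by
  have := proj_apply (inv f) b
  rwa [inv_inv, inv_val] at this

/-- `f` is a restriction of `g`. -/
def Res (f g : Elem ι n) : Prop := ∀ a b, f.1 a = some b → g.1 a = some b

lemma res_refl (f : Elem ι n) : Res f f := fun _ _ h => h

lemma res_trans {f g h : Elem ι n} (h1 : Res f g) (h2 : Res g h) : Res f h :=
  fun a b hab => h2 a b (h1 a b hab)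

lemma isIdem_apply {e : Elem ι n} (he : IsIdem e) {a b : ι} (hab : e.1 a = some b) :
    a = b := by
  have h : (e * e).1 a = e.1 a := by rw [he]
  rw [mul_apply, hab, Option.bind_some] at h
  -- h : e.1 b = some b
  have h1 : e.1.symm b = some a := (e.1.eq_some_iff).2 hab
  have h2 : e.1.symm b = some b := (e.1.eq_some_iff).2 h
  exact Option.some_injective _ (h1.symm.trans h2)

lemma proj_mul_of_res {f g : Elem ι n} (h : Res f g) : (f * inv f) * g = f := by
  refine (Subtype.ext (PEquiv.ext fun a => ?_)).symm
  rw [mul_apply, proj_apply]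
  cases hfa : f.1 a with
  | none => simp
  | some b => simpa [hfa] using (h a b hfa).symm

lemma isIdem_proj (f : Elem ι n) : IsIdem (f * inv f) := by
  refine Subtype.ext (PEquiv.ext fun a => ?_)
  rw [mul_apply, proj_apply]
  by_cases h : (f.1 a).isSome <;> simp [h, proj_apply]

lemma nle_iff {f g : Elem ι n} : nle f g ↔ Res f g := by
  constructor
  · rintro ⟨e, he, hfe⟩ a b hab
    rw [hfe, mul_apply] at hab
    rcases Option.bind_eq_some_iff.1 hab with ⟨c, hc, hcb⟩
    rw [isIdem_apply he hc]
    exact hcb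
  · intro h
    exact ⟨f * inv f, isIdem_proj f, (proj_mul_of_res h).symm⟩

lemma absorb (f : Elem ι n) : f * (inv f * f) = f := by
  refine Subtype.ext (PEquiv.ext fun a => ?_)
  rw [mul_apply]
  cases hfa : f.1 a with
  | none => simp
  | some b =>
    have : f.1.symm b = some a := (f.1.eq_some_iff).2 hfa
    simp [coproj_apply, this]

lemma gmap_eq_iff {f x : Elem ι n} :
    (f * inv f) * x * (inv f * f) = f ↔ Res f x := by
  constructor
  · intro h a b hab
    have h' : ((f * inv f) * x * (inv f * f)).1 a = some b := by rw [h]; exact hab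
    rw [mul_apply, mul_apply] at h'
    rcases Option.bind_eq_some_iff.1 h' with ⟨c, hc, hcb⟩
    rcases Option.bind_eq_some_iff.1 hc with ⟨d, hd, hdc⟩
    rw [proj_apply] at hd
    rw [coproj_apply] at hcb
    by_cases h1 : (f.1 a).isSome
    · simp only [h1, if_true] at hd
      by_cases h2 : (f.1.symm c).isSome
      · simp only [h2, if_true] at hcb
        obtain rfl : d = a := (Option.some_injective _ hd).symm
        obtain rfl : c = b := Option.some_injective _ hcb
        exact hdc
      · simp [h2] at hcb
    · simp [h1] at hd
  · intro h
    rw [proj_mul_of_res h, absorb]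

lemma dom_finite (f : Elem ι n) : {a : ι | (f.1 a).isSome}.Finite :=
  Set.finite_of_encard_le_coe f.2

lemma upset_eq (f : Elem ι n) :
    upset f = (fun x => (f * inv f) * x * (inv f * f)) ⁻¹' {f} := by
  ext x
  simp only [upset, Set.mem_setOf_eq, Set.mem_preimage, Set.mem_singleton_iff]
  rw [nle_iff, ← gmap_eq_iff]

lemma range_gmap_finite (f : Elem ι n) :
    (Set.range (fun x => (f * inv f) * x * (inv f * f))).Finite := by
  set D := {a : ι | (f.1 a).isSome} with hD
  set R := {b : ι | (f.1.symm b).isSome} with hR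
  have hDfin : D.Finite := dom_finite f
  have hRfin : R.Finite := dom_finite (inv f)
  set T : Set (Elem ι n) := {y | ∀ a b, y.1 a = some b → a ∈ D ∧ b ∈ R} with hT
  have hsub : Set.range (fun x => (f * inv f) * x * (inv f * f)) ⊆ T := by
    rintro _ ⟨x, rfl⟩ a b hab
    rw [mul_apply, mul_apply] at hab
    rcases Option.bind_eq_some_iff.1 hab with ⟨c, hc, hcb⟩
    rcases Option.bind_eq_some_iff.1 hc with ⟨d, hd, hdc⟩
    rw [proj_apply] at hd
    rw [coproj_apply] at hcb
    constructor
    · by_cases h1 : (f.1 a).isSome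
      · exact h1
      · simp [h1] at hd
    · by_cases h2 : (f.1.symm c).isSome
      · obtain rfl : c = b := by
          simp only [h2, if_true] at hcb
          exact Option.some_injective _ hcb
        exact h2
      · simp [h2] at hcb
  have hTfin : T.Finite := by
    set Φ : Elem ι n → Set (ι × ι) := fun y => {p | y.1 p.1 = some p.2} with hΦ
    have himg : (Φ '' T).Finite := by
      refine ((hDfin.prod hRfin).finite_subsets).subset ?_
      rintro _ ⟨y, hy, rfl⟩ ⟨a, b⟩ hab
      exact Set.mk_mem_prod (hy a b hab).1 (hy a b hab).2
    refine Set.Finite.of_finite_image himg ?_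
    intro y _ z _ h
    refine Subtype.ext (PEquiv.ext fun a => ?_)
    cases hy : y.1 a with
    | some b =>
      have : (a, b) ∈ Φ y := hy
      rw [h] at this
      exact this.symm
    | none =>
      cases hz : z.1 a with
      | some b =>
        have : (a, b) ∈ Φ z := hz
        rw [← h] at this
        exact absurd (hy ▸ this : (none : Option ι) = some b) (by simp)
      | none => rfl
  exact hTfin.subset hsub

variable [TopologicalSpace (Elem ι n)]

lemma continuous_gmap (hshift : ShiftContinuous ι n) (f : Elem ι n) :
    Continuous (fun x => (f * inv f) * x * (inv f * f)) :=
  ((hshift (inv f * f)).2).comp ((hshift (f * inv f)).1)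

lemma upset_clopen [T1Space (Elem ι n)] (hshift : ShiftContinuous ι n) (f : Elem ι n) :
    IsClosed (upset f) ∧ IsOpen (upset f) := by
  set g : Elem ι n → Elem ι n := fun x => (f * inv f) * x * (inv f * f) with hg
  have hcont : Continuous g := continuous_gmap hshift f
  have heq : upset f = g ⁻¹' {f} := upset_eq f
  constructor
  · rw [heq]
    exact isClosed_singleton.preimage hcont
  · have hrange : (Set.range g).Finite := range_gmap_finite f
    have hkey : g ⁻¹' {f} = (g ⁻¹' (Set.range g \ {f}))ᶜ := by
      ext x
      simp only [Set.mem_preimage, Set.mem_singleton_iff, Set.mem_compl_iff, Set.mem_diff,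
        Set.mem_range]
      constructor
      · rintro h ⟨-, h2⟩; exact h2 h
      · intro h; by_contra hne; exact h ⟨⟨x, rfl⟩, hne⟩
    rw [heq, hkey]
    exact (((hrange.diff (t := {f})).isClosed).preimage hcont).isOpen_compl

end ISemi

theorem stmt9 (ι : Type*) [Infinite ι] (n : ℕ) (hn : 0 < n)
    [TopologicalSpace (ISemi.Elem ι n)] [T1Space (ISemi.Elem ι n)]
    (hshift : ISemi.ShiftContinuous ι n) :
    IsClosed {p : ISemi.Elem ι n × ISemi.Elem ι n | ISemi.nle p.1 p.2} := by
  rw [← isOpen_compl_iff]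
  rw [isOpen_iff_forall_mem_open]
  rintro ⟨b, c⟩ hp
  simp only [Set.mem_compl_iff, Set.mem_setOf_eq] at hp
  obtain ⟨hcl, hop⟩ := ISemi.upset_clopen hshift b
  refine ⟨ISemi.upset b ×ˢ (ISemi.upset b)ᶜ, ?_, hop.prod hcl.isOpen_compl, ?_, ?_⟩
  · rintro ⟨x, y⟩ ⟨hx, hy⟩
    simp only [Set.mem_compl_iff, Set.mem_setOf_eq]
    intro hxy
    exact hy (ISemi.nle_iff.2 (ISemi.res_trans (ISemi.nle_iff.1 hx) (ISemi.nle_iff.1 hxy)))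
  · exact ISemi.nle_iff.2 (ISemi.res_refl b)
  · exact fun h => hp h
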